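/- b_n is rational if and only if the Euler-Gompertz constant G = e·E_1(1) is rational, for any fixed n ≥ 0. -/

import Mathlib

noncomputable def E1 (x : ℝ) : ℝ := ∫ t in Set.Ioi x, Real.exp (-t) / t

open Set MeasureTheory Filter ENNReal NNReal

lemma E1_integrableOn {a : ℝ} (ha : 0 < a) :
    IntegrableOn (fun t => Real.exp (-t) / t) (Set.Ioi a) := by
  apply Integrable.mono' ((exp_neg_integrableOn_Ioi a one_pos).const_mul a⁻¹)
  · refine (ContinuousOn.aestronglyMeasurable ?_ measurableSet_Ioi)
    apply ContinuousOn.div (Real.continuous_exp.comp continuous_neg).continuousOn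
      continuousOn_id
    intro t ht
    exact ne_of_gt (ha.trans ht)
  · filter_upwards [ae_restrict_mem measurableSet_Ioi] with t ht
    rw [Real.norm_eq_abs, abs_div, abs_of_pos (Real.exp_pos _), abs_of_pos (ha.trans ht)]
    rw [div_le_iff₀ (ha.trans ht)]
    have h1 : a⁻¹ * Real.exp (-1 * t) * a ≤ a⁻¹ * Real.exp (-1 * t) * t := by
      apply mul_le_mul_of_nonneg_left (le_of_lt ht)
      positivity
    calc Real.exp (-t) = a⁻¹ * Real.exp (-1*t) * a := by
          field_simp
      _ ≤ a⁻¹ * Real.exp (-1*t) * t := h1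
      _ = a⁻¹ * Real.exp (-(1:ℝ)*t) * t := rfl

lemma E1_split {a z : ℝ} (ha : 0 < a) (haz : a ≤ z) :
    E1 a = (∫ t in a..z, Real.exp (-t) / t) + E1 z := by
  have hmeas : MeasurableSet (Ioi z) := measurableSet_Ioi
  have h1 : IntegrableOn (fun t => Real.exp (-t) / t) (Ioc a z) :=
    (E1_integrableOn ha).mono_set Ioc_subset_Ioi_self
  have h2 : IntegrableOn (fun t => Real.exp (-t) / t) (Ioi z) :=
    (E1_integrableOn ha).mono_set (Ioi_subset_Ioi haz)
  have hdisj : Disjoint (Ioc a z) (Ioi z) := by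
    apply Set.disjoint_left.mpr
    intro t ht ht'
    exact absurd ht.2 (not_le.mpr ht')
  have := setIntegral_union hdisj hmeas h1 h2 (f := fun t => Real.exp (-t) / t) (μ := volume)
  rw [Ioc_union_Ioi_eq_Ioi haz] at this
  rw [intervalIntegral.integral_of_le haz]
  exact this

lemma E1_hasDerivAt {y : ℝ} (hy : 0 < y) :
    HasDerivAt E1 (-(Real.exp (-y) / y)) y := by
  set a := y / 2 with ha_def
  have ha : 0 < a := by positivity
  have hay : a < y := by simp [ha_def]; linarith
  have hInt : IntervalIntegrable (fun t => Real.exp (-t) / t) volume a y := by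
    rw [intervalIntegrable_iff_integrableOn_Ioc_of_le hay.le]
    exact (E1_integrableOn ha).mono_set Ioc_subset_Ioi_self
  have hcont : ContinuousAt (fun t => Real.exp (-t) / t) y := by
    apply ContinuousAt.div
    · exact (Real.continuous_exp.comp continuous_neg).continuousAt
    · exact continuousAt_id
    · exact ne_of_gt hy
  have hmeas : StronglyMeasurableAtFilter (fun t => Real.exp (-t) / t) (nhds y) := by
    refine ContinuousAt.stronglyMeasurableAtFilter isOpen_Ioi (fun x (hx : x ∈ Ioi a) => ?_) y hay
    apply ContinuousAt.div
    · exact (Real.continuous_exp.comp continuous_neg).continuousAt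
    · exact continuousAt_id
    · exact ne_of_gt (ha.trans hx)
  have hD : HasDerivAt (fun z => E1 a - ∫ t in a..z, Real.exp (-t) / t)
      (-(Real.exp (-y) / y)) y := by
    exact (intervalIntegral.integral_hasDerivAt_right hInt hmeas hcont).const_sub (E1 a)
  apply hD.congr_of_eventuallyEq
  filter_upwards [isOpen_Ioi.mem_nhds hay] with z (hz : a < z)
  have := E1_split ha hz.le
  linarith

lemma f_hasDerivAt {x : ℝ} (hx : x < 1) :
    HasDerivAt (fun z => Real.exp (1 / (1 - z)) * E1 (1 / (1 - z)))
      ((1/(1-x))^2 * (Real.exp (1/(1-x)) * E1 (1/(1-x))) - 1/(1-x)) x := by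
  have h1x : (0:ℝ) < 1 - x := by linarith
  set u := 1 / (1 - x) with hu_def
  have hu : 0 < u := by positivity
  have hne : (1:ℝ) - x ≠ 0 := ne_of_gt h1x
  have hU : HasDerivAt (fun z : ℝ => 1 / (1 - z)) (u ^ 2) x := by
    have hc : HasDerivAt (fun z : ℝ => 1 - z) (-1) x := by
      simpa using (hasDerivAt_id x).const_sub 1
    have := hc.inv hne
    simp only [one_div]
    refine this.congr_deriv ?_
    rw [hu_def]
    field_simp
  have hG : HasDerivAt (fun y => Real.exp y * E1 y)
      (Real.exp u * E1 u + Real.exp u * (-(Real.exp (-u) / u))) u :=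
    (Real.hasDerivAt_exp u).mul (E1_hasDerivAt hu)
  have hcomp := hG.comp x hU
  refine hcomp.congr_deriv ?_
  symm
  have hexp : Real.exp u * Real.exp (-u) = 1 := by
    rw [← Real.exp_add]; simp
  have h2 : Real.exp u * -(Real.exp (-u) / u) = -(1/u) := by
    rw [mul_neg, ← mul_div_assoc, hexp]
  rw [h2]
  have hune : u ≠ 0 := ne_of_gt hu
  field_simp
  ring

open FormalMultilinearSeries

lemma radius_ge_one (c : ℕ → ℝ) (h : ∀ x : ℝ, |x| < 1 → Summable (fun n => c n * x ^ n)) :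
    1 ≤ (ofScalars ℝ c).radius := by
  refine ENNReal.le_of_forall_nnreal_lt (fun r hr => ?_)
  have hr1 : (r : ℝ) < 1 := by exact_mod_cast hr
  have habs : |(r : ℝ)| < 1 := by rwa [abs_of_nonneg r.coe_nonneg]
  have hs := (h r habs).tendsto_atTop_zero
  apply FormalMultilinearSeries.le_radius_of_isBigO
  refine ((hs.isBigO_one ℝ).norm_left).congr' (Eventually.of_forall fun n => ?_) EventuallyEq.rfl
  show ‖c n * (r : ℝ) ^ n‖ = ‖ofScalars ℝ c n‖ * (r : ℝ) ^ n
  rw [ofScalars_norm, Real.norm_eq_abs, Real.norm_eq_abs, abs_mul, abs_pow,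
    abs_of_nonneg r.coe_nonneg]

lemma hasFPS (c : ℕ → ℝ) (f : ℝ → ℝ)
    (h : ∀ x : ℝ, |x| < 1 → HasSum (fun n => c n * x ^ n) (f x)) :
    HasFPowerSeriesOnBall f (ofScalars ℝ c) 0 1 := by
  refine ⟨radius_ge_one c (fun x hx => (h x hx).summable), zero_lt_one, fun {y} hy => ?_⟩
  rw [EMetric.mem_ball, edist_zero_right] at hy
  have h1 : |y| < 1 := by
    have : (‖y‖₊ : ℝ≥0∞) < 1 := hy
    rw [← Real.norm_eq_abs, ← coe_nnnorm]
    exact_mod_cast this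
  have hfe : (fun n => (ofScalars ℝ c n) fun _ => y) = fun n => c n * y ^ n :=
    funext fun n => by rw [ofScalars_apply_eq, smul_eq_mul]
  rw [hfe, zero_add]
  exact h y h1

lemma coeff_eq_zero {c : ℕ → ℝ} (h : ∀ x : ℝ, |x| < 1 → HasSum (fun n => c n * x ^ n) 0) :
    ∀ n, c n = 0 := by
  have h0 : HasFPowerSeriesOnBall (0 : ℝ → ℝ) (ofScalars ℝ c) 0 1 := hasFPS c 0 h
  have h1 := h0.hasFPowerSeriesAt.eq_zero
  have hc : c = 0 := (ofScalars_series_eq_zero ℝ).mp h1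
  exact fun n => congrFun hc n

lemma hasSum_deriv (c : ℕ → ℝ) (f : ℝ → ℝ)
    (hp : HasFPowerSeriesOnBall f (ofScalars ℝ c) 0 1) {y L : ℝ} (hy : |y| < 1) (hy0 : y ≠ 0)
    (hd : HasDerivAt f L y) :
    HasSum (fun n : ℕ => ((n : ℝ) + 1) * c (n + 1) * y ^ n) L := by
  have hw := hp.hasFPowerSeriesWithinOnBall (s := Set.univ)
  have hy' : (‖y‖₊ : ℝ≥0∞) < 1 := by
    rw [← Real.norm_eq_abs, ← coe_nnnorm] at hy
    exact_mod_cast hy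
  have hmem : (0 : ℝ) + y ∈ insert (0 : ℝ) Set.univ := by simp
  have hf' : HasFDerivWithinAt f (ContinuousLinearMap.smulRight (1 : ℝ →L[ℝ] ℝ) L)
      (insert (0 : ℝ) Set.univ) ((0 : ℝ) + y) := by
    rw [zero_add]
    exact hd.hasFDerivAt.hasFDerivWithinAt
  have hu : UniqueDiffOn ℝ (insert (0 : ℝ) Set.univ) := by
    simp [uniqueDiffOn_univ]
  have h2 := hw.hasSum_derivSeries_of_hasFDerivWithinAt hy' hmem hf' hu
  have h3 := h2.mapL (ContinuousLinearMap.apply ℝ ℝ y)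
  simp only [ContinuousLinearMap.apply_apply, derivSeries_apply_diag,
    ofScalars_apply_eq, nsmul_eq_mul, smul_eq_mul, ContinuousLinearMap.smulRight_apply,
    ContinuousLinearMap.one_apply, Nat.cast_add, Nat.cast_one] at h3
  have h4 := h3.mul_left y⁻¹
  have heq : ∀ n : ℕ, y⁻¹ * (((n : ℝ) + 1) * (c (n + 1) * y ^ (n + 1)))
      = ((n : ℝ) + 1) * c (n + 1) * y ^ n := by
    intro n
    rw [pow_succ]
    field_simp
  have hval : y⁻¹ * (y * L) = L := by field_simp
  simpa [heq, hval] using h4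

lemma hasSum_shift {c : ℕ → ℝ} {x S : ℝ} (k : ℕ) (h : HasSum (fun n => c n * x ^ n) S) :
    HasSum (fun m => (if k ≤ m then c (m - k) else 0) * x ^ m) (x ^ k * S) := by
  refine (hasSum_nat_add_iff' k).mp ?_
  have hz : ∑ i ∈ Finset.range k, (if k ≤ i then c (i - k) else 0) * x ^ i = 0 :=
    Finset.sum_eq_zero (fun i hi => by simp [Nat.not_le.mpr (Finset.mem_range.mp hi)])
  rw [hz, sub_zero]
  have heq : (fun n : ℕ => (if k ≤ n + k then c (n + k - k) else 0) * x ^ (n + k))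
      = fun n : ℕ => x ^ k * (c n * x ^ n) := by
    funext n
    rw [if_pos (Nat.le_add_left k n), Nat.add_sub_cancel, pow_add]
    ring
  rw [heq]
  exact h.mul_left (x ^ k)

/-- For any fixed `n ≥ 0`, the coefficient `bₙ` of `exp(1/(1-z)) E₁(1/(1-z))` is
rational if and only if the Euler–Gompertz constant `G = e·E₁(1)` is rational. -/
theorem stmt_11 (b : ℕ → ℝ)
    (hb : ∀ x : ℝ, |x| < 1 → HasSum (fun n => b n * x ^ n)
      (Real.exp (1 / (1 - x)) * E1 (1 / (1 - x)))) :
    ∀ n : ℕ, (∃ q : ℚ, b n = (q : ℝ)) ↔ ∃ q : ℚ, Real.exp 1 * E1 1 = (q : ℝ) := by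
  intro n
  set G := Real.exp 1 * E1 1 with hG_def
  set f : ℝ → ℝ := fun x => Real.exp (1 / (1 - x)) * E1 (1 / (1 - x)) with hf_def
  have hb' : ∀ x : ℝ, |x| < 1 → HasSum (fun n => b n * x ^ n) (f x) := fun x hx => hb x hx
  have hp : HasFPowerSeriesOnBall f (ofScalars ℝ b) 0 1 := hasFPS b f hb'
  have hb0 : b 0 = G := by
    have h1 := hb 0 (by norm_num)
    have h2 : HasSum (fun n => b n * (0 : ℝ) ^ n) (b 0) := by
      have : b 0 = b 0 * (0 : ℝ) ^ 0 := by simp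
      rw [this]
      exact hasSum_single 0 (fun m hm => by simp [zero_pow hm])
    have h3 := h2.unique h1
    simpa [hG_def] using h3
  set d : ℕ → ℝ := fun n => ((n : ℝ) + 1) * b (n + 1) with hd_def
  have hder : ∀ x : ℝ, |x| < 1 → x ≠ 0 →
      HasSum (fun n => d n * x ^ n) ((1 / (1 - x)) ^ 2 * f x - 1 / (1 - x)) := by
    intro x hx hx0
    exact hasSum_deriv b f hp hx hx0 (f_hasDerivAt (lt_of_abs_lt hx))
  set e : ℕ → ℝ := fun m =>
    (if 1 ≤ m then d (m - 1) else 0) - 2 * (if 2 ≤ m then d (m - 2) else 0)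
      + (if 3 ≤ m then d (m - 3) else 0) - (if 1 ≤ m then b (m - 1) else 0)
      + (if m = 1 then (1 : ℝ) else 0) - (if m = 2 then (1 : ℝ) else 0) with he_def
  have hezero : ∀ m, e m = 0 := by
    apply _root_.coeff_eq_zero
    intro x hx
    rcases eq_or_ne x 0 with rfl | hx0
    · have hz : (fun m => e m * (0 : ℝ) ^ m) = fun _ => (0 : ℝ) := by
        funext m
        match m with
        | 0 => simp [he_def]
        | m + 1 => simp
      rw [hz]
      exact hasSum_zero
    · have hx1 : x < 1 := lt_of_abs_lt hx
      have hne : (1 : ℝ) - x ≠ 0 := by intro h; linarith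
      have hbx := hb' x hx
      have hdx := hder x hx hx0
      have h1 := hasSum_shift 1 hdx
      have h2 := (hasSum_shift 2 hdx).mul_left 2
      have h3 := hasSum_shift 3 hdx
      have h4 := hasSum_shift 1 hbx
      have h5 : HasSum (fun m : ℕ => (if m = 1 then (1 : ℝ) else 0) * x ^ m) (x ^ 1) := by
        have : x ^ 1 = (if 1 = 1 then (1 : ℝ) else 0) * x ^ 1 := by simp
        rw [this]
        exact hasSum_single 1 (fun m hm => by simp [hm])
      have h6 : HasSum (fun m : ℕ => (if m = 2 then (1 : ℝ) else 0) * x ^ m) (x ^ 2) := by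
        have : x ^ 2 = (if 2 = 2 then (1 : ℝ) else 0) * x ^ 2 := by simp
        rw [this]
        exact hasSum_single 2 (fun m hm => by simp [hm])
      have H := ((((h1.sub h2).add h3).sub h4).add h5).sub h6
      have hfe : (fun m : ℕ =>
          (if 1 ≤ m then d (m - 1) else 0) * x ^ m
            - 2 * ((if 2 ≤ m then d (m - 2) else 0) * x ^ m)
            + (if 3 ≤ m then d (m - 3) else 0) * x ^ m
            - (if 1 ≤ m then b (m - 1) else 0) * x ^ m
            + (if m = 1 then (1 : ℝ) else 0) * x ^ m
            - (if m = 2 then (1 : ℝ) else 0) * x ^ m) = fun m => e m * x ^ m := by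
        funext m
        simp only [he_def]
        ring
      have hval : x ^ 1 * ((1 / (1 - x)) ^ 2 * f x - 1 / (1 - x))
          - 2 * (x ^ 2 * ((1 / (1 - x)) ^ 2 * f x - 1 / (1 - x)))
          + x ^ 3 * ((1 / (1 - x)) ^ 2 * f x - 1 / (1 - x))
          - x ^ 1 * f x + x ^ 1 - x ^ 2 = 0 := by
        field_simp
        ring
      rw [hfe, hval] at H
      exact H
  have r1 : b 1 = b 0 - 1 := by
    have h := hezero 1
    simp only [he_def, hd_def] at h
    norm_num at h
    linarith
  have r2 : 2 * b 2 = 3 * b 1 + 1 := by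
    have h := hezero 2
    simp only [he_def, hd_def] at h
    norm_num at h
    linarith
  have r3 : ∀ m : ℕ, ((m : ℝ) + 3) * b (m + 3)
      = (2 * (m : ℝ) + 5) * b (m + 2) - ((m : ℝ) + 1) * b (m + 1) := by
    intro m
    have h := hezero (m + 3)
    simp only [he_def, hd_def] at h
    norm_num at h
    push_cast at h ⊢
    linarith
  have key : ∀ k : ℕ, ∃ q r q' r' : ℚ,
      0 < q ∧ q ≤ q' ∧ b k = q * G - r ∧ b (k + 1) = q' * G - r' := by
    intro k
    induction k with
    | zero =>
      refine ⟨1, 0, 1, 1, one_pos, le_refl 1, by push_cast; simp [hb0], ?_⟩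
      push_cast
      rw [r1, hb0]
      ring
    | succ k ih =>
      obtain ⟨q, r, q', r', hq, hqq', hbk, hbk1⟩ := ih
      have hq' : 0 < q' := lt_of_lt_of_le hq hqq'
      match k with
      | 0 =>
        norm_num at hbk1
        refine ⟨q', r', 3 / 2 * q', (3 * r' - 1) / 2, hq', by linarith, by norm_num; exact hbk1, ?_⟩
        push_cast
        show b 2 = _
        have h2 := r2
        rw [hbk1] at h2
        linarith
      | m + 1 =>
        have h := r3 m
        rw [show m + 1 + 1 = m + 2 from rfl] at hbk1
        rw [show m + 1 + 1 + 1 = m + 3 from rfl]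
        rw [hbk, hbk1] at h
        have hm3 : (0 : ℚ) < (m : ℚ) + 3 := by positivity
        refine ⟨q', r', ((2 * m + 5) * q' - (m + 1) * q) / (m + 3),
          ((2 * m + 5) * r' - (m + 1) * r) / (m + 3), hq', ?_, hbk1, ?_⟩
        · rw [le_div_iff₀ hm3]
          have hm0 : (0 : ℚ) ≤ (m : ℚ) := Nat.cast_nonneg m
          nlinarith
        · have hm3' : ((m : ℝ) + 3) ≠ 0 := by positivity
          push_cast
          rw [div_mul_eq_mul_div, ← _root_.sub_div, eq_div_iff hm3']
          linear_combination h
  obtain ⟨q, r, q', r', hq, hqq', hbn, -⟩ := key n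
  constructor
  · rintro ⟨s, hs⟩
    refine ⟨(s + r) / q, ?_⟩
    have hqne : (q : ℝ) ≠ 0 := by exact_mod_cast ne_of_gt hq
    push_cast
    rw [eq_div_iff hqne]
    rw [hs] at hbn
    linarith
  · rintro ⟨t, ht⟩
    refine ⟨q * t - r, ?_⟩
    push_cast
    rw [hbn, ht]
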